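/- For every real a, the improper integral ∫_{−∞}^{∞} sech³(t)·tanh(t)·sin(a t) dt equals π·a·(1 + a²) / (6·cosh(πa/2)). -/

import Mathlib

open MeasureTheory Real Set Complex

noncomputable def sC (a : ℝ) : ℂ := 1/2 + (a/2) * Complex.I

lemma beta_value (a : ℝ) :
    Complex.betaIntegral (sC a) (1 - sC a) = ((π / Real.cosh (π * a / 2) : ℝ) : ℂ) := by
  have hcosh : (Real.cosh (π * a / 2) : ℝ) ≠ 0 := (Real.cosh_pos _).ne'
  have hre : 0 < (sC a).re := by simp [sC]
  have hre2 : 0 < (1 - sC a).re := by simp [sC]; norm_num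
  have h1 := Complex.Gamma_mul_Gamma_eq_betaIntegral hre hre2
  have hsum : sC a + (1 - sC a) = 1 := by ring
  rw [hsum, Complex.Gamma_one, one_mul] at h1
  have hsin : Complex.sin (π * sC a) = (Real.cosh (π * a / 2) : ℂ) := by
    have h : (π : ℂ) * sC a = π/2 + ((π * a / 2 : ℝ) : ℂ) * Complex.I := by
      push_cast [sC]; ring
    rw [h, Complex.sin_add, Complex.sin_pi_div_two, Complex.cos_pi_div_two,
      Complex.cos_mul_I, Complex.ofReal_cosh]
    ring
  rw [← h1, Complex.Gamma_mul_Gamma_one_sub, hsin]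
  push_cast
  rfl

noncomputable def fsub (t : ℝ) : ℝ := (1 + Real.exp (-2*t))⁻¹

lemma fsub_hasDeriv (t : ℝ) :
    HasDerivAt fsub (2 * Real.exp (-2*t) / (1 + Real.exp (-2*t))^2) t := by
  have h0 : (1 : ℝ) + Real.exp (-2*t) ≠ 0 := by positivity
  have h1 : HasDerivAt (fun t : ℝ => 1 + Real.exp (-2*t)) (Real.exp (-2*t) * (-2)) t := by
    simpa using (((hasDerivAt_id t).const_mul (-2 : ℝ)).exp).const_add 1
  have := h1.inv h0
  convert this using 1
  · rfl
  · rfl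
  · rfl
  ring

lemma fsub_mono : StrictMono fsub := by
  intro x y hxy
  have hx : (0:ℝ) < 1 + Real.exp (-2*x) := by positivity
  have : Real.exp (-2*y) < Real.exp (-2*x) := by
    apply Real.exp_lt_exp.2; linarith
  exact inv_strictAnti₀ (by positivity) (by linarith)

lemma fsub_mem (t : ℝ) : fsub t ∈ Ioo (0:ℝ) 1 := by
  have h : (0:ℝ) < 1 + Real.exp (-2*t) := by positivity
  constructor
  · exact inv_pos.2 h
  · unfold fsub; rw [inv_lt_one_iff₀]; right; linarith [Real.exp_pos (-2*t)]

lemma fsub_image : fsub '' univ = Ioo (0:ℝ) 1 := by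
  apply Subset.antisymm
  · rintro _ ⟨t, -, rfl⟩; exact fsub_mem t
  · rintro y ⟨hy0, hy1⟩
    refine ⟨-Real.log (1/y - 1)/2, mem_univ _, ?_⟩
    have h1 : 0 < 1/y - 1 := by
      rw [lt_sub_iff_add_lt, zero_add, lt_div_iff₀ hy0, one_mul]; exact hy1
    unfold fsub
    rw [show -2 * (-Real.log (1/y - 1)/2) = Real.log (1/y - 1) by ring,
      Real.exp_log h1]
    field_simp; ring

lemma beta_integral_eq (a : ℝ) :
    Complex.betaIntegral (sC a) (1 - sC a)
      = ∫ t : ℝ, ((Real.cosh t : ℂ))⁻¹ * Complex.exp ((a * t : ℝ) * Complex.I) := by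
  rw [Complex.betaIntegral, intervalIntegral.integral_of_le zero_le_one,
    MeasureTheory.integral_Ioc_eq_integral_Ioo, ← fsub_image,
    MeasureTheory.integral_image_eq_integral_abs_deriv_smul MeasurableSet.univ
      (fun t _ => (fsub_hasDeriv t).hasDerivWithinAt) (fsub_mono.injective.injOn)
      (fun x : ℝ => (x : ℂ) ^ (sC a - 1) * ((1:ℂ) - (x:ℝ)) ^ (1 - sC a - 1)),
    MeasureTheory.setIntegral_univ]
  apply MeasureTheory.integral_congr_ae
  filter_upwards with t
  set u : ℝ := Real.exp (-2*t) with hu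
  have hu0 : 0 < u := Real.exp_pos _
  have h1u : (0:ℝ) < 1 + u := by positivity
  have hx := fsub_mem t
  set x : ℝ := fsub t with hxdef
  have hx0 : 0 < x := hx.1
  have hx1 : x < 1 := hx.2
  have hxval : x = (1 + u)⁻¹ := rfl
  have h1x : (1:ℝ) - x = u / (1 + u) := by
    rw [hxval]; field_simp; ring
  -- logs
  set L : ℝ := Real.log (1 + u) with hL
  have hlogx : Real.log x = -L := by rw [hxval, Real.log_inv]
  have hlog1x : Real.log (1 - x) = -2*t - L := by
    rw [h1x, Real.log_div hu0.ne' h1u.ne', hu, Real.log_exp]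
  -- cpow to exp
  have hcpow1 : (x : ℂ) ^ (sC a - 1) = Complex.exp ((-L : ℝ) * (sC a - 1)) := by
    rw [Complex.cpow_def_of_ne_zero (by exact_mod_cast hx0.ne'), ← Complex.ofReal_log hx0.le,
      hlogx]
  have hcpow2 : ((1:ℂ) - (x:ℝ)) ^ (1 - sC a - 1) = Complex.exp (((-2*t - L : ℝ)) * (-sC a)) := by
    have h1xc : (1:ℂ) - (x:ℝ) = ((1 - x : ℝ) : ℂ) := by push_cast; ring
    have h1x0 : (0:ℝ) < 1 - x := by linarith
    rw [h1xc, Complex.cpow_def_of_ne_zero (by exact_mod_cast h1x0.ne'),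
      ← Complex.ofReal_log h1x0.le, hlog1x]
    ring_nf
  rw [hcpow1, hcpow2, ← Complex.exp_add]
  have hexp : ((-L : ℝ) : ℂ) * (sC a - 1) + ((-2*t - L : ℝ) : ℂ) * (-sC a)
      = (L : ℝ) + ((t : ℝ) + ((a*t : ℝ)) * Complex.I) := by
    unfold sC; push_cast; ring
  rw [hexp, Complex.exp_add, Complex.exp_add, ← Complex.ofReal_exp, ← Complex.ofReal_exp,
    Real.exp_log h1u]
  have habs : |2 * Real.exp (-2*t) / (1 + Real.exp (-2*t))^2|
      = 2 * u / (1 + u)^2 := by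
    rw [abs_of_pos]; positivity
  rw [habs, Complex.real_smul, ← Complex.ofReal_inv]
  have hAB : Real.exp t * Real.exp (-t) = 1 := by rw [← Real.exp_add]; simp
  have hu2 : u = Real.exp (-t) * Real.exp (-t) := by rw [hu, ← Real.exp_add]; ring_nf
  have hreal : 2*u/(1+u)^2 * ((1+u) * Real.exp t) = (Real.cosh t)⁻¹ := by
    rw [Real.cosh_eq]
    have h2 : Real.exp t + Real.exp (-t) > 0 := by positivity
    field_simp
    rw [hu2]
    linear_combination (Real.exp t*Real.exp (-t)+1+Real.exp (-t)*Real.exp (-t)) * hAB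
  calc ((2 * u / (1+u)^2 : ℝ) : ℂ) * ((((1+u:ℝ)):ℂ) * (((Real.exp t : ℝ) : ℂ) * Complex.exp (((a*t : ℝ)) * Complex.I)))
      = ((2*u/(1+u)^2 * ((1+u) * Real.exp t) : ℝ) : ℂ) * Complex.exp (((a*t:ℝ)) * Complex.I) := by
        push_cast; ring
    _ = (((Real.cosh t)⁻¹ : ℝ) : ℂ) * Complex.exp (((a*t:ℝ)) * Complex.I) := by rw [hreal]

lemma integrable_exp_neg_abs : Integrable (fun t : ℝ => Real.exp (-|t|)) := by
  rw [← MeasureTheory.integrableOn_univ, ← Set.Iic_union_Ioi (a := (0:ℝ))]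
  apply MeasureTheory.IntegrableOn.union
  · exact (integrableOn_exp_Iic 0).congr_fun
      (fun t ht => by rw [abs_of_nonpos ht, neg_neg]) measurableSet_Iic
  · exact (exp_neg_integrableOn_Ioi 0 one_pos).congr_fun
      (fun t ht => by beta_reduce; rw [neg_one_mul, abs_of_pos ht]) measurableSet_Ioi

lemma sech_le (t : ℝ) : (Real.cosh t)⁻¹ ≤ 2 * Real.exp (-|t|) := by
  have h : Real.exp |t| / 2 ≤ Real.cosh t := by
    rw [Real.cosh_eq]
    rcases abs_cases t with ⟨h1, _⟩ | ⟨h1, _⟩ <;> rw [h1] <;>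
      nlinarith [Real.exp_pos t, Real.exp_pos (-t)]
  rw [inv_le_iff_one_le_mul₀ (Real.cosh_pos t)]
  have := Real.exp_add (-|t|) |t|
  simp at this
  nlinarith [Real.exp_pos (-|t|), Real.exp_pos |t|]

lemma integrable_sech : Integrable (fun t : ℝ => (Real.cosh t)⁻¹) := by
  apply (integrable_exp_neg_abs.const_mul 2).mono'
    (Continuous.aestronglyMeasurable
      (Real.continuous_cosh.inv₀ (fun t => (Real.cosh_pos t).ne')))
  filter_upwards with t
  rw [Real.norm_eq_abs, Pi.inv_apply, abs_of_pos (inv_pos.2 (Real.cosh_pos t))]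
  exact sech_le t

lemma integrable_of_sech_bound {E : Type*} [NormedAddCommGroup E] (f : ℝ → E)
    (hf : Continuous f) (C : ℝ) (hb : ∀ t, ‖f t‖ ≤ C * (Real.cosh t)⁻¹) :
    Integrable f := by
  apply (integrable_sech.const_mul C).mono' hf.aestronglyMeasurable
  filter_upwards with t using hb t

lemma sech_fourier (a : ℝ) :
    ∫ t : ℝ, Real.cos (a * t) * (Real.cosh t)⁻¹ = π / Real.cosh (π * a / 2) := by
  have hint : Integrable (fun t : ℝ => ((Real.cosh t : ℂ))⁻¹ * Complex.exp ((a * t : ℝ) * Complex.I)) := by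
    apply integrable_of_sech_bound _ ?_ 1
    · intro t
      rw [norm_mul, Complex.norm_exp_ofReal_mul_I, mul_one, norm_inv, Complex.norm_real,
        Real.norm_eq_abs, abs_of_pos (Real.cosh_pos t), one_mul]
    · exact (Complex.continuous_ofReal.comp Real.continuous_cosh).inv₀
        (fun t => by simp; exact_mod_cast (Real.cosh_pos t).ne') |>.mul
        (Complex.continuous_exp.comp (by continuity))
  have h1 := integral_re hint
  have h2 : (∫ t : ℝ, ((Real.cosh t : ℂ))⁻¹ * Complex.exp ((a * t : ℝ) * Complex.I))
      = ((π / Real.cosh (π * a / 2) : ℝ) : ℂ) := by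
    rw [← beta_integral_eq, beta_value]
  rw [h2] at h1
  simp only [RCLike.re_to_complex, Complex.ofReal_re] at h1
  rw [← h1]
  apply MeasureTheory.integral_congr_ae
  filter_upwards with t
  rw [← Complex.ofReal_inv, Complex.re_ofReal_mul, Complex.exp_ofReal_mul_I_re]
  ring
lemma abs_sinh_le_cosh (t : ℝ) : |Real.sinh t| ≤ Real.cosh t := by
  nlinarith [Real.cosh_sq_sub_sinh_sq t, abs_nonneg (Real.sinh t), _root_.sq_abs (Real.sinh t), Real.cosh_pos t]

lemma hasDerivAt_sin_mul (a t : ℝ) : HasDerivAt (fun t => Real.sin (a*t)) (a * Real.cos (a*t)) t := by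
  simpa [mul_comm, Function.comp_def] using (Real.hasDerivAt_sin (a*t)).comp t ((hasDerivAt_id t).const_mul a)

lemma hasDerivAt_cos_mul (a t : ℝ) : HasDerivAt (fun t => Real.cos (a*t)) (-(a * Real.sin (a*t))) t := by
  simpa [mul_comm, Function.comp_def] using (Real.hasDerivAt_cos (a*t)).comp t ((hasDerivAt_id t).const_mul a)

lemma hasDerivAt_sech_cube (t : ℝ) : HasDerivAt (fun t => ((Real.cosh t)⁻¹)^3) (-3 * Real.sinh t / Real.cosh t^4) t := by
  have h := (((Real.hasDerivAt_cosh t).inv (Real.cosh_pos t).ne')).pow 3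
  convert h using 1
  · rfl
  · rfl
  · rfl
  have h0 := (Real.cosh_pos t).ne'
  simp only [Pi.inv_apply, Nat.cast_ofNat, Nat.add_one_sub_one, inv_pow]
  field_simp
  all_goals try ring
  all_goals (left; first | trivial | ring)

lemma hasDerivAt_sech (t : ℝ) : HasDerivAt (fun t => (Real.cosh t)⁻¹) (-(Real.sinh t / Real.cosh t^2)) t := by
  have h := (Real.hasDerivAt_cosh t).inv (Real.cosh_pos t).ne'
  convert h using 1
  · rfl
  · rfl
  · rfl
  ring

lemma hasDerivAt_neg_sech_tanh (t : ℝ) : HasDerivAt (fun t => -(Real.sinh t / Real.cosh t^2))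
    ((Real.cosh t)⁻¹ - 2*((Real.cosh t)⁻¹)^3) t := by
  have h := ((Real.hasDerivAt_sinh t).div ((Real.hasDerivAt_cosh t).pow 2)
    (by positivity : Real.cosh t ^ 2 ≠ 0)).neg
  convert h using 1
  · rfl
  · rfl
  · rfl
  have hc := (Real.cosh_pos t).ne'
  have hs := Real.sinh_sq t
  simp only [Pi.pow_apply, Nat.cast_ofNat]
  field_simp
  linear_combination (-2*Real.cosh t) * hs

lemma integrable_trig_sech (f g : ℝ → ℝ) (hf : Continuous f) (hg : Continuous g)
    (C D : ℝ) (hfb : ∀ t, |f t| ≤ C) (hgb : ∀ t, |g t| ≤ D * (Real.cosh t)⁻¹) :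
    Integrable (fun t => f t * g t) := by
  apply integrable_of_sech_bound _ (hf.mul hg) (C * D)
  intro t
  rw [Real.norm_eq_abs, Pi.mul_apply, abs_mul, mul_assoc]
  exact mul_le_mul (hfb t) (hgb t) (abs_nonneg _) ((abs_nonneg (f t)).trans (hfb t))

lemma gb_sech (t : ℝ) : |(Real.cosh t)⁻¹| ≤ 1 * (Real.cosh t)⁻¹ := by
  rw [abs_of_pos (inv_pos.2 (Real.cosh_pos t)), one_mul]

lemma gb_sech_cube (t : ℝ) : |((Real.cosh t)⁻¹)^3| ≤ 1 * (Real.cosh t)⁻¹ := by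
  have h1 : (0:ℝ) < (Real.cosh t)⁻¹ := inv_pos.2 (Real.cosh_pos t)
  have h2 : (Real.cosh t)⁻¹ ≤ 1 := inv_le_one_of_one_le₀ (Real.one_le_cosh t)
  rw [abs_of_pos (by positivity), one_mul]
  nlinarith [mul_nonneg (mul_nonneg h1.le (sub_nonneg.2 h2)) (add_nonneg zero_le_one h1.le)]

lemma gb_sech_tanh (t : ℝ) : |-(Real.sinh t / Real.cosh t^2)| ≤ 1 * (Real.cosh t)⁻¹ := by
  have hc := Real.cosh_pos t
  have h1 := Real.one_le_cosh t
  have h2 := abs_sinh_le_cosh t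
  rw [abs_neg, abs_div, abs_of_pos (by positivity : (0:ℝ) < Real.cosh t^2),
    div_le_iff₀ (by positivity)]
  have h3 : (Real.cosh t)⁻¹ * Real.cosh t ^ 2 = Real.cosh t := by field_simp
  rw [one_mul, h3]
  exact h2

lemma gb_sech3_sinh (t : ℝ) : |-3 * Real.sinh t / Real.cosh t^4| ≤ 3 * (Real.cosh t)⁻¹ := by
  have hc := Real.cosh_pos t
  have h1 := Real.one_le_cosh t
  have h2 := abs_sinh_le_cosh t
  rw [abs_div, abs_of_pos (by positivity : (0:ℝ) < Real.cosh t^4),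
    div_le_iff₀ (by positivity)]
  have h3 : 3 * (Real.cosh t)⁻¹ * Real.cosh t ^ 4 = 3 * Real.cosh t ^ 3 := by field_simp
  rw [h3, abs_mul]
  have : |(-3 : ℝ)| = 3 := by norm_num
  rw [this]
  nlinarith [mul_nonneg (mul_nonneg hc.le (sub_nonneg.2 h1)) (by linarith : (0:ℝ) ≤ Real.cosh t + 1)]

lemma gb_mix (t : ℝ) : |(Real.cosh t)⁻¹ - 2*((Real.cosh t)⁻¹)^3| ≤ 3 * (Real.cosh t)⁻¹ := by
  have h1 : (0:ℝ) < (Real.cosh t)⁻¹ := inv_pos.2 (Real.cosh_pos t)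
  have h2 : (Real.cosh t)⁻¹ ≤ 1 := inv_le_one_of_one_le₀ (Real.one_le_cosh t)
  rw [abs_le]
  constructor <;>
    nlinarith [mul_nonneg (mul_nonneg h1.le (sub_nonneg.2 h2)) (add_nonneg zero_le_one h1.le),
      pow_pos h1 3]



/-- For every real a, ∫ sech³(t)·tanh(t)·sin(a t) dt over ℝ equals
π·a·(1 + a²)/(6·cosh(πa/2)). -/
theorem integral_sech_cube_tanh_sin (a : ℝ) :
    ∫ t : ℝ, (1 / Real.cosh t) ^ 3 * Real.tanh t * Real.sin (a * t)
      = Real.pi * a * (1 + a ^ 2) / (6 * Real.cosh (Real.pi * a / 2)) := by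
  have hcne : ∀ t : ℝ, Real.cosh t ≠ 0 := fun t => (Real.cosh_pos t).ne'
  -- continuity facts
  have hcont_sech : Continuous fun t : ℝ => (Real.cosh t)⁻¹ :=
    Real.continuous_cosh.inv₀ hcne
  have hcont_sech3 : Continuous fun t : ℝ => ((Real.cosh t)⁻¹)^3 := hcont_sech.pow 3
  have hcont_st : Continuous fun t : ℝ => -(Real.sinh t / Real.cosh t^2) :=
    (Real.continuous_sinh.div (Real.continuous_cosh.pow 2) (fun t => pow_ne_zero 2 (hcne t))).neg
  have hcont_s3 : Continuous fun t : ℝ => -3 * Real.sinh t / Real.cosh t^4 :=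
    (continuous_const.mul Real.continuous_sinh).div (Real.continuous_cosh.pow 4)
      (fun t => by positivity)
  have hcont_mix : Continuous fun t : ℝ => (Real.cosh t)⁻¹ - 2*((Real.cosh t)⁻¹)^3 :=
    hcont_sech.sub (continuous_const.mul hcont_sech3)
  have hcont_sin : Continuous fun t : ℝ => Real.sin (a*t) :=
    Real.continuous_sin.comp (continuous_const.mul continuous_id)
  have hcont_cos : Continuous fun t : ℝ => Real.cos (a*t) :=
    Real.continuous_cos.comp (continuous_const.mul continuous_id)
  have hsinb : ∀ t : ℝ, |Real.sin (a*t)| ≤ 1 := fun t => Real.abs_sin_le_one _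
  have hcosb : ∀ t : ℝ, |Real.cos (a*t)| ≤ 1 := fun t => Real.abs_cos_le_one _
  have hasinb : ∀ t : ℝ, |a * Real.sin (a*t)| ≤ |a| := fun t => by
    rw [abs_mul]; nlinarith [hsinb t, abs_nonneg a]
  have hacosb : ∀ t : ℝ, |a * Real.cos (a*t)| ≤ |a| := fun t => by
    rw [abs_mul]; nlinarith [hcosb t, abs_nonneg a]
  -- notations
  set I := ∫ t : ℝ, Real.cos (a*t) * (Real.cosh t)⁻¹ with hIdef
  set J := ∫ t : ℝ, Real.cos (a*t) * ((Real.cosh t)⁻¹)^3 with hJdef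
  set S := ∫ t : ℝ, Real.sin (a*t) * (Real.sinh t / Real.cosh t^2) with hSdef
  have hI : I = π / Real.cosh (π * a / 2) := sech_fourier a
  -- IBP 2 : S = a * I
  have ibp2 := MeasureTheory.integral_mul_deriv_eq_deriv_mul_of_integrable
    (u := fun t => Real.sin (a*t)) (u' := fun t => a * Real.cos (a*t))
    (v := fun t => (Real.cosh t)⁻¹) (v' := fun t => -(Real.sinh t / Real.cosh t^2))
    (fun t _ => hasDerivAt_sin_mul a t) (fun t _ => hasDerivAt_sech t)
    (integrable_trig_sech _ _ hcont_sin hcont_st 1 1 hsinb gb_sech_tanh)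
    (integrable_trig_sech _ _ (continuous_const.mul hcont_cos) hcont_sech |a| 1 hacosb gb_sech)
    (integrable_trig_sech _ _ hcont_sin hcont_sech 1 1 hsinb gb_sech)
  have hS : S = a * I := by
    have l1 : ∫ t : ℝ, Real.sin (a*t) * -(Real.sinh t / Real.cosh t^2) = -S := by
      rw [hSdef, ← MeasureTheory.integral_neg]
      congr 1; funext t; ring
    have l2 : ∫ t : ℝ, (a * Real.cos (a*t)) * (Real.cosh t)⁻¹ = a * I := by
      rw [hIdef, ← MeasureTheory.integral_const_mul]
      congr 1; funext t; ring
    rw [l1, l2] at ibp2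
    linarith
  -- IBP 1 : I - 2 J = - a * S
  have ibp1 := MeasureTheory.integral_mul_deriv_eq_deriv_mul_of_integrable
    (u := fun t => Real.cos (a*t)) (u' := fun t => -(a * Real.sin (a*t)))
    (v := fun t => -(Real.sinh t / Real.cosh t^2))
    (v' := fun t => (Real.cosh t)⁻¹ - 2*((Real.cosh t)⁻¹)^3)
    (fun t _ => hasDerivAt_cos_mul a t) (fun t _ => hasDerivAt_neg_sech_tanh t)
    (integrable_trig_sech _ _ hcont_cos hcont_mix 1 3 hcosb gb_mix)
    (integrable_trig_sech _ _ ((continuous_const.mul hcont_sin).neg) hcont_st |a| 1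
      (fun t => by rw [abs_neg]; exact hasinb t) gb_sech_tanh)
    (integrable_trig_sech _ _ hcont_cos hcont_st 1 1 hcosb gb_sech_tanh)
  have hJ : J = (1 + a^2)/2 * I := by
    have l1 : ∫ t : ℝ, Real.cos (a*t) * ((Real.cosh t)⁻¹ - 2*((Real.cosh t)⁻¹)^3)
        = I - 2 * J := by
      have : (fun t : ℝ => Real.cos (a*t) * ((Real.cosh t)⁻¹ - 2*((Real.cosh t)⁻¹)^3))
          = fun t : ℝ => Real.cos (a*t) * (Real.cosh t)⁻¹
              - 2 * (Real.cos (a*t) * ((Real.cosh t)⁻¹)^3) := by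
        funext t; ring
      rw [this, MeasureTheory.integral_sub
        (integrable_trig_sech _ _ hcont_cos hcont_sech 1 1 hcosb gb_sech)
        ((integrable_trig_sech _ _ hcont_cos hcont_sech3 1 1 hcosb gb_sech_cube).const_mul 2),
        MeasureTheory.integral_const_mul]
    have l2 : ∫ t : ℝ, (-(a * Real.sin (a*t))) * -(Real.sinh t / Real.cosh t^2) = a * S := by
      rw [hSdef, ← MeasureTheory.integral_const_mul]
      congr 1; funext t; ring
    rw [l1, l2, hS] at ibp1
    nlinarith [ibp1]
  -- IBP 3 : final
  have ibp3 := MeasureTheory.integral_mul_deriv_eq_deriv_mul_of_integrable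
    (u := fun t => Real.sin (a*t)) (u' := fun t => a * Real.cos (a*t))
    (v := fun t => ((Real.cosh t)⁻¹)^3) (v' := fun t => -3 * Real.sinh t / Real.cosh t^4)
    (fun t _ => hasDerivAt_sin_mul a t) (fun t _ => hasDerivAt_sech_cube t)
    (integrable_trig_sech _ _ hcont_sin hcont_s3 1 3 hsinb gb_sech3_sinh)
    (integrable_trig_sech _ _ (continuous_const.mul hcont_cos) hcont_sech3 |a| 1 hacosb
      gb_sech_cube)
    (integrable_trig_sech _ _ hcont_sin hcont_sech3 1 1 hsinb gb_sech_cube)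
  have hfin : ∫ t : ℝ, Real.sin (a*t) * (Real.sinh t / Real.cosh t^4) = a * J / 3 := by
    have l1 : ∫ t : ℝ, Real.sin (a*t) * (-3 * Real.sinh t / Real.cosh t^4)
        = -3 * ∫ t : ℝ, Real.sin (a*t) * (Real.sinh t / Real.cosh t^4) := by
      rw [← MeasureTheory.integral_const_mul]
      congr 1; funext t; ring
    have l2 : ∫ t : ℝ, (a * Real.cos (a*t)) * ((Real.cosh t)⁻¹)^3 = a * J := by
      rw [hJdef, ← MeasureTheory.integral_const_mul]
      congr 1; funext t; ring
    rw [l1, l2] at ibp3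
    linarith
  have heq : (fun t : ℝ => (1 / Real.cosh t) ^ 3 * Real.tanh t * Real.sin (a * t))
      = fun t : ℝ => Real.sin (a*t) * (Real.sinh t / Real.cosh t^4) := by
    funext t
    rw [Real.tanh_eq_sinh_div_cosh]
    field_simp
  rw [heq, hfin, hJ, hI]
  have hcne2 : Real.cosh (π * a / 2) ≠ 0 := hcne _
  field_simp
  ring
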